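/- Let P be a partition (a weakly decreasing, eventually zero sequence of nonnegative integers P_0 ≥ P_1 ≥ ⋯) and Λ an arithmetic progression (a proper subset of ℤ whose set of differences is closed under addition). Then the downward displacement P⁻_Λ and upward displacement P⁺_Λ are again partitions (weakly decreasing, eventually zero), and P⁻_Λ ≤ P ≤ P⁺_Λ termwise. -/
import Mathlib


open scoped Classical

/-- A partition: weakly decreasing, eventually zero sequence of nonnegative integers. -/
def IsPartition (P : ℕ → ℕ) : Prop :=
  (∀ i, P (i + 1) ≤ P i) ∧ ∃ N, ∀ n ≥ N, P n = 0

/-- An arithmetic progression: a proper subset of ℤ whose set of differences is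
closed under addition. -/
def IsAP (Λ : Set ℤ) : Prop :=
  Λ ≠ Set.univ ∧
    ∀ a b c d : ℤ, a ∈ Λ → b ∈ Λ → c ∈ Λ → d ∈ Λ →
      ∃ x ∈ Λ, ∃ y ∈ Λ, x - y = (a - b) + (c - d)

/-- Upward displacement of a partition with respect to an arithmetic progression.
The convention `P_{-1} = ∞` is encoded by the disjunct `i = 0`. -/
noncomputable def upDisp (P : ℕ → ℕ) (Λ : Set ℤ) : ℕ → ℕ :=
  fun i => if ((P i : ℤ) - i) ∈ Λ ∧ (i = 0 ∨ P i < P (i - 1)) then P i + 1 else P i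

/-- Downward displacement of a partition with respect to an arithmetic progression. -/
noncomputable def downDisp (P : ℕ → ℕ) (Λ : Set ℤ) : ℕ → ℕ :=
  fun i => if ((P i : ℤ) - i - 1) ∈ Λ ∧ P (i + 1) < P i then P i - 1 else P i

/-- The sum `|P|` of the parts of a partition. -/
noncomputable def psum (P : ℕ → ℕ) : ℕ := ∑ᶠ i, P i

/-- Two partitions are linked if some arithmetic progression displaces one to the other. -/
def Linked (P Q : ℕ → ℕ) : Prop :=
  ∃ Λ : Set ℤ, IsAP Λ ∧ Q = upDisp P Λ ∧ P = downDisp Q Λ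

/-- `k`-linked: linked with sums differing by `k`. -/
def KLinked (k : ℕ) (P Q : ℕ → ℕ) : Prop :=
  Linked P Q ∧ psum Q = psum P + k

/-- A valid sequence of partitions: adjacent pairs are 1-linked or 2-linked. -/
def ValidSeq (n : ℕ) (s : ℕ → ℕ → ℕ) : Prop :=
  (∀ j ≤ n, IsPartition (s j)) ∧
    ∀ j < n, KLinked 1 (s j) (s (j + 1)) ∨ KLinked 2 (s j) (s (j + 1))

/-- The difficulty `δ(P)`: the least number of 1-linked adjacent pairs in a valid
sequence from the empty partition to `P`. -/
noncomputable def delta (P : ℕ → ℕ) : ℕ :=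
  sInf { c | ∃ n s, ValidSeq n s ∧ s 0 = (fun _ => 0) ∧ s n = P ∧
    c = ((Finset.range n).filter fun j => KLinked 1 (s j) (s (j + 1))).card }

/-- The conjugate (dual) partition: `P*_n = #{m : P_m > n}`. -/
noncomputable def conj (P : ℕ → ℕ) : ℕ → ℕ := fun n => Set.ncard { m | n < P m }
/-- Displacements of a partition are partitions, and `P⁻_Λ ≤ P ≤ P⁺_Λ` termwise. -/
theorem stmt0 (P : ℕ → ℕ) (Λ : Set ℤ) (hP : IsPartition P) (hΛ : IsAP Λ) :
    IsPartition (downDisp P Λ) ∧ IsPartition (upDisp P Λ) ∧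
      (∀ i, downDisp P Λ i ≤ P i) ∧ (∀ i, P i ≤ upDisp P Λ i) := by
  obtain ⟨hmono, N, hN⟩ := hP
  refine ⟨⟨?_, ⟨N, ?_⟩⟩, ⟨?_, ⟨N + 1, ?_⟩⟩, ?_, ?_⟩
  · intro i
    simp only [downDisp]
    have h1 := hmono i
    split_ifs with ha hb hb
    · omega
    · omega
    · have := hb.2; omega
    · omega
  · intro n hn
    simp only [downDisp]
    have := hN n hn
    split_ifs <;> omega
  · intro i
    have h1 := hmono i
    have key : ((P (i + 1) : ℤ) - ((i + 1 : ℕ) : ℤ)) ∈ Λ ∧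
        (i + 1 = 0 ∨ P (i + 1) < P (i + 1 - 1)) → P (i + 1) < P i := by
      rintro ⟨-, h | h⟩
      · omega
      · simpa using h
    simp only [upDisp]
    by_cases hA : ((P (i + 1) : ℤ) - ((i + 1 : ℕ) : ℤ)) ∈ Λ ∧
        (i + 1 = 0 ∨ P (i + 1) < P (i + 1 - 1)) <;>
      by_cases hB : ((P i : ℤ) - i) ∈ Λ ∧ (i = 0 ∨ P i < P (i - 1))
    · rw [if_pos hA, if_pos hB]; omega
    · rw [if_pos hA, if_neg hB]; have := key hA; omega
    · rw [if_neg hA, if_pos hB]; omega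
    · rw [if_neg hA, if_neg hB]; omega
  · intro n hn
    simp only [upDisp]
    have h0 := hN n (by omega)
    have h1 := hN (n - 1) (by omega)
    split_ifs with h
    · rcases h.2 with h | h <;> omega
    · exact h0
  · intro i
    simp only [downDisp]
    split_ifs <;> omega
  · intro i
    simp only [upDisp]
    split_ifs <;> omega
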